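/- arXiv:1502.02968 — 6 statements merged into one kernel-verified Lean document; each statement's English description precedes it below -/
import Mathlib

section
/- Let μ be a probability measure on ℝ with finite first moment, fixed T > 0, and F(T,y) = ∫ exp(θy − θ²T/2) dμ(θ), Θ̂(T,y) = ∫ θ exp(θy − θ²T/2) dμ(θ)/F(T,y). Assume μ is supported on (0,∞). For t ∈ [0,T), y ∈ ℝ, γ < 1, define f(γ) = ∫ Θ̂(T,y+z) q(z;γ) dz, where q(z;γ) = F(T,y+z)^{1/(1−γ)} φ_{T−t}(z)/∫ F(T,y+w)^{1/(1−γ)} φ_{T−t}(w) dw. Then f(γ) > 0 and f is monotone increasing on (−∞,1). -/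
open MeasureTheory Real


/-- One-dimensional Chebyshev/FKG swap inequality via the product measure. -/
lemma swap_ineq {ν : Measure ℝ} [SFinite ν] {f₁ g₁ f₂ g₂ : ℝ → ℝ}
    (hf₁ : Integrable f₁ ν) (hg₁ : Integrable g₁ ν)
    (hf₂ : Integrable f₂ ν) (hg₂ : Integrable g₂ ν)
    (hpt : ∀ z w, f₂ z * g₂ w + f₂ w * g₂ z ≤ f₁ z * g₁ w + f₁ w * g₁ z) :
    (∫ z, f₂ z ∂ν) * (∫ z, g₂ z ∂ν) ≤ (∫ z, f₁ z ∂ν) * (∫ z, g₁ z ∂ν) := by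
  have h1 : Integrable (fun p : ℝ × ℝ => f₁ p.1 * g₁ p.2) (ν.prod ν) := hf₁.mul_prod hg₁
  have h2 : Integrable (fun p : ℝ × ℝ => g₁ p.1 * f₁ p.2) (ν.prod ν) := hg₁.mul_prod hf₁
  have h3 : Integrable (fun p : ℝ × ℝ => f₂ p.1 * g₂ p.2) (ν.prod ν) := hf₂.mul_prod hg₂
  have h4 : Integrable (fun p : ℝ × ℝ => g₂ p.1 * f₂ p.2) (ν.prod ν) := hg₂.mul_prod hf₂
  have key : 0 ≤ ∫ p : ℝ × ℝ, (f₁ p.1 * g₁ p.2 + g₁ p.1 * f₁ p.2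
      - (f₂ p.1 * g₂ p.2 + g₂ p.1 * f₂ p.2)) ∂(ν.prod ν) := by
    refine integral_nonneg fun p => ?_
    show (0:ℝ) ≤ _
    have := hpt p.1 p.2
    have := hpt p.2 p.1
    simp only [sub_nonneg]
    linarith [mul_comm (g₁ p.1) (f₁ p.2), mul_comm (g₂ p.1) (f₂ p.2)]
  have h12 : Integrable (fun p : ℝ × ℝ => f₁ p.1 * g₁ p.2 + g₁ p.1 * f₁ p.2) (ν.prod ν) :=
    h1.add h2
  have h34 : Integrable (fun p : ℝ × ℝ => f₂ p.1 * g₂ p.2 + g₂ p.1 * f₂ p.2) (ν.prod ν) :=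
    h3.add h4
  rw [integral_sub h12 h34, integral_add h1 h2, integral_add h3 h4,
    integral_prod_mul, integral_prod_mul, integral_prod_mul, integral_prod_mul] at key
  linarith

lemma integral_pos' {ν : Measure ℝ} {g : ℝ → ℝ} (hne : ν ≠ 0)
    (hg : ∀ᵐ x ∂ν, 0 < g x) (hint : Integrable g ν) : 0 < ∫ x, g x ∂ν := by
  rw [integral_pos_iff_support_of_nonneg_ae (hg.mono fun x hx => hx.le) hint]
  by_contra h
  push_neg at h
  have hz : ν (Function.support g) = 0 := le_antisymm h bot_le
  have hae : ∀ᵐ x ∂ν, x ∉ Function.support g := by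
    rw [ae_iff]; simpa [Function.support] using hz
  have hne' : (ae ν).NeBot := ae_neBot.2 hne
  obtain ⟨x, hx1, hx2⟩ := (hg.and hae).exists
  exact hx2 (by simpa [Function.mem_support] using hx1.ne')

lemma pt_ineq {az aw gz gw pz pw : ℝ} (hA : az ≤ aw) (hgz : 0 < gz) (hg : gz ≤ gw)
    (hpz : 0 ≤ pz) (hpw : 0 ≤ pw) {p₁ p₂ : ℝ} (hp : p₁ ≤ p₂) :
    az * gz ^ p₁ * pz * (gw ^ p₂ * pw) + aw * gw ^ p₁ * pw * (gz ^ p₂ * pz) ≤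
    az * gz ^ p₂ * pz * (gw ^ p₁ * pw) + aw * gw ^ p₂ * pw * (gz ^ p₁ * pz) := by
  have hgw : 0 < gw := lt_of_lt_of_le hgz hg
  have key : gz ^ p₂ * gw ^ p₁ ≤ gz ^ p₁ * gw ^ p₂ := by
    have e1 : gz ^ p₂ = gz ^ p₁ * gz ^ (p₂ - p₁) := by
      rw [← Real.rpow_add hgz]; ring_nf
    have e2 : gw ^ p₂ = gw ^ p₁ * gw ^ (p₂ - p₁) := by
      rw [← Real.rpow_add hgw]; ring_nf
    have h3 : gz ^ (p₂ - p₁) ≤ gw ^ (p₂ - p₁) :=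
      Real.rpow_le_rpow hgz.le hg (by linarith)
    calc gz ^ p₂ * gw ^ p₁ = gz ^ p₁ * gw ^ p₁ * gz ^ (p₂ - p₁) := by rw [e1]; ring
      _ ≤ gz ^ p₁ * gw ^ p₁ * gw ^ (p₂ - p₁) := by
          apply mul_le_mul_of_nonneg_left h3
          positivity
      _ = gz ^ p₁ * gw ^ p₂ := by rw [e2]; ring
  nlinarith [mul_nonneg (mul_nonneg (sub_nonneg.2 hA) (sub_nonneg.2 key)) (mul_nonneg hpz hpw)]

lemma pt_exp {θ θ' s₁ s₂ c c' : ℝ} (hs : s₁ ≤ s₂) :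
    θ * Real.exp (θ * s₁ + c) * Real.exp (θ' * s₂ + c') +
      θ' * Real.exp (θ' * s₁ + c') * Real.exp (θ * s₂ + c) ≤
    θ * Real.exp (θ * s₂ + c) * Real.exp (θ' * s₁ + c') +
      θ' * Real.exp (θ' * s₂ + c') * Real.exp (θ * s₁ + c) := by
  rcases le_total θ θ' with h | h
  · have he : Real.exp (θ * s₂ + c) * Real.exp (θ' * s₁ + c') ≤
        Real.exp (θ * s₁ + c) * Real.exp (θ' * s₂ + c') := by
      rw [← Real.exp_add, ← Real.exp_add]
      apply Real.exp_le_exp.2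
      nlinarith
    nlinarith [mul_nonneg (sub_nonneg.2 h) (sub_nonneg.2 he)]
  · have he : Real.exp (θ * s₁ + c) * Real.exp (θ' * s₂ + c') ≤
        Real.exp (θ * s₂ + c) * Real.exp (θ' * s₁ + c') := by
      rw [← Real.exp_add, ← Real.exp_add]
      apply Real.exp_le_exp.2
      nlinarith
    nlinarith [mul_nonneg (sub_nonneg.2 h) (sub_nonneg.2 he)]

/-- with μ a probability measure supported on `(0,∞)` with finite first
moment, `F(T,y) = ∫ exp(θy - θ²T/2) dμ`, `Θ̂(T,y)` the posterior mean, and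
`q(z;γ)` the normalized density `F(T,y+z)^{1/(1-γ)} φ_{T-t}(z)`, the function
`f(γ) = ∫ Θ̂(T,y+z) q(z;γ) dz` is positive and monotone increasing on `(-∞,1)`. -/
theorem stmt5 (μ : Measure ℝ) [IsProbabilityMeasure μ]
    (hsupp : ∀ᵐ θ ∂μ, 0 < θ)
    (hmom : Integrable (fun θ : ℝ => |θ|) μ)
    (T t y : ℝ) (ht : 0 ≤ t) (htT : t < T)
    (F Θhat : ℝ → ℝ)
    (hF : ∀ s, F s = ∫ θ, Real.exp (θ * s - θ ^ 2 * T / 2) ∂μ)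
    (hΘ : ∀ s, Θhat s = (∫ θ, θ * Real.exp (θ * s - θ ^ 2 * T / 2) ∂μ) / F s)
    (hFint : ∀ s, Integrable (fun θ : ℝ => Real.exp (θ * s - θ ^ 2 * T / 2)) μ)
    (hNint : ∀ s, Integrable (fun θ : ℝ => θ * Real.exp (θ * s - θ ^ 2 * T / 2)) μ)
    (φ : ℝ → ℝ)
    (hφ : ∀ z, φ z = Real.exp (-z ^ 2 / (2 * (T - t))) / Real.sqrt (2 * π * (T - t)))
    (q : ℝ → ℝ → ℝ)
    (hq : ∀ γ < (1:ℝ), ∀ z, q z γ =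
      F (y + z) ^ (1 / (1 - γ)) * φ z / ∫ w, F (y + w) ^ (1 / (1 - γ)) * φ w)
    (hqint : ∀ γ < (1:ℝ), Integrable (fun w => F (y + w) ^ (1 / (1 - γ)) * φ w))
    (hfint : ∀ γ < (1:ℝ), Integrable (fun z => Θhat (y + z) * q z γ))
    (f : ℝ → ℝ) (hf : ∀ γ < (1:ℝ), f γ = ∫ z, Θhat (y + z) * q z γ) :
    (∀ γ < (1:ℝ), 0 < f γ) ∧ MonotoneOn f (Set.Iio 1) := by
  have hμne : μ ≠ 0 := IsProbabilityMeasure.ne_zero μ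
  have hvne : (volume : Measure ℝ) ≠ 0 := by
    refine Measure.measure_univ_ne_zero.mp ?_
    simp
  -- positivity of F
  have hFpos : ∀ s, 0 < F s := by
    intro s
    rw [hF s]
    exact integral_pos' hμne (Filter.Eventually.of_forall fun θ => Real.exp_pos _) (hFint s)
  have hNpos : ∀ s, 0 < ∫ θ, θ * Real.exp (θ * s - θ ^ 2 * T / 2) ∂μ := by
    intro s
    exact integral_pos' hμne (hsupp.mono fun θ hθ => mul_pos hθ (Real.exp_pos _)) (hNint s)
  have hΘpos : ∀ s, 0 < Θhat s := by
    intro s; rw [hΘ s]; exact div_pos (hNpos s) (hFpos s)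
  have hFmono : ∀ s₁ s₂ : ℝ, s₁ ≤ s₂ → F s₁ ≤ F s₂ := by
    intro s₁ s₂ hs
    rw [hF s₁, hF s₂]
    refine integral_mono_ae (hFint s₁) (hFint s₂) (hsupp.mono fun θ hθ => ?_)
    exact Real.exp_le_exp.2 (by nlinarith)
  have hΘmono : ∀ s₁ s₂ : ℝ, s₁ ≤ s₂ → Θhat s₁ ≤ Θhat s₂ := by
    intro s₁ s₂ hs
    have key := swap_ineq (ν := μ)
      (f₁ := fun θ => θ * Real.exp (θ * s₂ - θ ^ 2 * T / 2))
      (g₁ := fun θ => Real.exp (θ * s₁ - θ ^ 2 * T / 2))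
      (f₂ := fun θ => θ * Real.exp (θ * s₁ - θ ^ 2 * T / 2))
      (g₂ := fun θ => Real.exp (θ * s₂ - θ ^ 2 * T / 2))
      (hNint s₂) (hFint s₁) (hNint s₁) (hFint s₂) ?_
    · have key' : (∫ θ, θ * Real.exp (θ * s₁ - θ ^ 2 * T / 2) ∂μ) * F s₂ ≤
          (∫ θ, θ * Real.exp (θ * s₂ - θ ^ 2 * T / 2) ∂μ) * F s₁ := by
        rw [hF s₁, hF s₂]; exact key
      rw [hΘ s₁, hΘ s₂]
      exact (div_le_div_iff₀ (hFpos s₁) (hFpos s₂)).2 key'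
    · intro z w
      have H := pt_exp (θ := z) (θ' := w) (s₁ := s₁) (s₂ := s₂)
        (c := -(z ^ 2 * T / 2)) (c' := -(w ^ 2 * T / 2)) hs
      simp only [sub_eq_add_neg]
      exact H
  have hφpos : ∀ z, 0 < φ z := by
    intro z
    rw [hφ z]
    refine div_pos (Real.exp_pos _) (Real.sqrt_pos.2 ?_)
    nlinarith [Real.pi_pos]
  -- denominators
  have hD : ∀ γ < (1:ℝ), 0 < ∫ w, F (y + w) ^ (1 / (1 - γ)) * φ w := by
    intro γ hγ
    refine integral_pos' hvne (Filter.Eventually.of_forall fun w => ?_) (hqint γ hγ)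
    exact mul_pos (Real.rpow_pos_of_pos (hFpos _) _) (hφpos w)
  -- integrability of the unnormalized numerator
  have hXint : ∀ γ < (1:ℝ),
      Integrable (fun z => Θhat (y + z) * (F (y + z) ^ (1 / (1 - γ)) * φ z)) := by
    intro γ hγ
    have h := (hfint γ hγ).mul_const (∫ w, F (y + w) ^ (1 / (1 - γ)) * φ w)
    refine h.congr (Filter.Eventually.of_forall fun z => ?_)
    show Θhat (y + z) * q z γ * _ = _
    rw [hq γ hγ z, mul_assoc, div_mul_cancel₀ _ (hD γ hγ).ne']
  have hfval : ∀ γ < (1:ℝ), f γ =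
      (∫ z, Θhat (y + z) * (F (y + z) ^ (1 / (1 - γ)) * φ z)) /
        ∫ w, F (y + w) ^ (1 / (1 - γ)) * φ w := by
    intro γ hγ
    rw [hf γ hγ, ← integral_div]
    congr 1
    funext z
    rw [hq γ hγ z]
    ring
  constructor
  · intro γ hγ
    rw [hfval γ hγ]
    refine div_pos (integral_pos' hvne (Filter.Eventually.of_forall fun z => ?_) (hXint γ hγ))
      (hD γ hγ)
    exact mul_pos (hΘpos _) (mul_pos (Real.rpow_pos_of_pos (hFpos _) _) (hφpos z))
  · intro γ₁ hγ₁ γ₂ hγ₂ hle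
    simp only [Set.mem_Iio] at hγ₁ hγ₂
    have hp : 1 / (1 - γ₁) ≤ 1 / (1 - γ₂) :=
      one_div_le_one_div_of_le (by linarith) (by linarith)
    have key := swap_ineq (ν := (volume : Measure ℝ))
      (f₁ := fun z => Θhat (y + z) * (F (y + z) ^ (1 / (1 - γ₂)) * φ z))
      (g₁ := fun w => F (y + w) ^ (1 / (1 - γ₁)) * φ w)
      (f₂ := fun z => Θhat (y + z) * (F (y + z) ^ (1 / (1 - γ₁)) * φ z))
      (g₂ := fun w => F (y + w) ^ (1 / (1 - γ₂)) * φ w)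
      (hXint γ₂ hγ₂) (hqint γ₁ hγ₁) (hXint γ₁ hγ₁) (hqint γ₂ hγ₂) ?_
    · rw [hfval γ₁ hγ₁, hfval γ₂ hγ₂]
      exact (div_le_div_iff₀ (hD γ₁ hγ₁) (hD γ₂ hγ₂)).2 key
    · intro z w
      rcases le_total z w with hzw | hzw
      · have H := pt_ineq (hΘmono _ _ (by linarith : y + z ≤ y + w)) (hFpos (y + z))
          (hFmono _ _ (by linarith : y + z ≤ y + w)) (hφpos z).le (hφpos w).le hp
        ring_nf at H ⊢
        linarith
      · have H := pt_ineq (hΘmono _ _ (by linarith : y + w ≤ y + z)) (hFpos (y + w))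
          (hFmono _ _ (by linarith : y + w ≤ y + z)) (hφpos w).le (hφpos z).le hp
        ring_nf at H ⊢
        linarith
end

section
/- With notation as in the previous context but with μ supported on (−∞,0), the function f(γ) = ∫ Θ̂(T,y+z) q(z;γ) dz is negative and monotone decreasing in γ on (−∞,1). -/
open MeasureTheory Real


lemma cheb {α : Type*} [MeasurableSpace α] (ν : Measure α) [SigmaFinite ν]
    (g h W : α → ℝ)
    (hmono : ∀ x y, 0 ≤ (g x - g y) * (h x - h y))
    (i1 : Integrable W ν)
    (i2 : Integrable (fun x => g x * W x) ν)
    (i3 : Integrable (fun x => h x * W x) ν)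
    (i4 : Integrable (fun x => g x * h x * W x) ν)
    (hW : ∀ x, 0 ≤ W x) :
    (∫ x, g x * W x ∂ν) * (∫ x, h x * W x ∂ν) ≤
      (∫ x, g x * h x * W x ∂ν) * (∫ x, W x ∂ν) := by
  have key : 0 ≤ ∫ z : α × α, (g z.1 - g z.2) * (h z.1 - h z.2) * (W z.1 * W z.2) ∂(ν.prod ν) := by
    apply integral_nonneg
    intro z
    exact mul_nonneg (hmono z.1 z.2) (mul_nonneg (hW z.1) (hW z.2))
  have hA : Integrable (fun z : α × α => g z.1 * h z.1 * W z.1 * W z.2 +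
      W z.1 * (g z.2 * h z.2 * W z.2)) (ν.prod ν) := (i4.mul_prod i1).add (i1.mul_prod i4)
  have hB : Integrable (fun z : α × α => g z.1 * W z.1 * (h z.2 * W z.2) +
      h z.1 * W z.1 * (g z.2 * W z.2)) (ν.prod ν) := (i2.mul_prod i3).add (i3.mul_prod i2)
  have e1 : ∀ z : α × α, (g z.1 - g z.2) * (h z.1 - h z.2) * (W z.1 * W z.2)
      = (g z.1 * h z.1 * W z.1 * W z.2 + W z.1 * (g z.2 * h z.2 * W z.2))
        - (g z.1 * W z.1 * (h z.2 * W z.2) + h z.1 * W z.1 * (g z.2 * W z.2)) := by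
    intro z; ring
  simp_rw [e1] at key
  have E1 : ∫ z : α × α, g z.1 * h z.1 * W z.1 * W z.2 ∂(ν.prod ν)
      = (∫ x, g x * h x * W x ∂ν) * ∫ x, W x ∂ν :=
    integral_prod_mul (fun x => g x * h x * W x) W
  have E2 : ∫ z : α × α, W z.1 * (g z.2 * h z.2 * W z.2) ∂(ν.prod ν)
      = (∫ x, W x ∂ν) * ∫ x, g x * h x * W x ∂ν :=
    integral_prod_mul W (fun x => g x * h x * W x)
  have E3 : ∫ z : α × α, g z.1 * W z.1 * (h z.2 * W z.2) ∂(ν.prod ν)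
      = (∫ x, g x * W x ∂ν) * ∫ x, h x * W x ∂ν :=
    integral_prod_mul (fun x => g x * W x) (fun x => h x * W x)
  have E4 : ∫ z : α × α, h z.1 * W z.1 * (g z.2 * W z.2) ∂(ν.prod ν)
      = (∫ x, h x * W x ∂ν) * ∫ x, g x * W x ∂ν :=
    integral_prod_mul (fun x => h x * W x) (fun x => g x * W x)
  rw [integral_sub hA hB,
    integral_add (i4.mul_prod i1) (i1.mul_prod i4),
    integral_add (i2.mul_prod i3) (i3.mul_prod i2),
    E1, E2, E3, E4] at key
  nlinarith [key]

lemma neg_integral {α : Type*} [MeasurableSpace α] {ν : Measure α} (hν : ν ≠ 0) {f : α → ℝ}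
    (hf : Integrable f ν) (hneg : ∀ᵐ x ∂ν, f x < 0) : ∫ x, f x ∂ν < 0 := by
  have h1 : 0 ≤ᵐ[ν] fun x => -f x := hneg.mono fun x hx => by simp; linarith
  have hsup : 0 < ν (Function.support fun x => -f x) := by
    by_contra hz
    push_neg at hz
    have h0 : ν (Function.support fun x => -f x) = 0 := le_antisymm hz (zero_le)
    have hae : ∀ᵐ x ∂ν, x ∉ (Function.support fun x => -f x) :=
      measure_eq_zero_iff_ae_notMem.1 h0
    have : (ae ν).NeBot := ae_neBot.2 hν
    obtain ⟨x, hx1, hx2⟩ := (hneg.and hae).exists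
    exact hx2 (by simp [Function.mem_support]; linarith)
  have := (integral_pos_iff_support_of_nonneg_ae h1 hf.neg).2 hsup
  rw [integral_neg] at this
  linarith


/-- with μ a probability measure supported on `(-∞,0)` with finite first
moment, `F(T,y) = ∫ exp(θy - θ²T/2) dμ`, `Θ̂(T,y)` the posterior mean, and
`q(z;γ)` the normalized density `F(T,y+z)^{1/(1-γ)} φ_{T-t}(z)`, the function
`f(γ) = ∫ Θ̂(T,y+z) q(z;γ) dz` is negative and monotone decreasing on `(-∞,1)`. -/
theorem stmt6 (μ : Measure ℝ) [IsProbabilityMeasure μ]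
    (hsupp : ∀ᵐ θ ∂μ, θ < 0)
    (hmom : Integrable (fun θ : ℝ => |θ|) μ)
    (T t y : ℝ) (ht : 0 ≤ t) (htT : t < T)
    (F Θhat : ℝ → ℝ)
    (hF : ∀ s, F s = ∫ θ, Real.exp (θ * s - θ ^ 2 * T / 2) ∂μ)
    (hΘ : ∀ s, Θhat s = (∫ θ, θ * Real.exp (θ * s - θ ^ 2 * T / 2) ∂μ) / F s)
    (hFint : ∀ s, Integrable (fun θ : ℝ => Real.exp (θ * s - θ ^ 2 * T / 2)) μ)
    (hNint : ∀ s, Integrable (fun θ : ℝ => θ * Real.exp (θ * s - θ ^ 2 * T / 2)) μ)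
    (φ : ℝ → ℝ)
    (hφ : ∀ z, φ z = Real.exp (-z ^ 2 / (2 * (T - t))) / Real.sqrt (2 * π * (T - t)))
    (q : ℝ → ℝ → ℝ)
    (hq : ∀ γ < (1:ℝ), ∀ z, q z γ =
      F (y + z) ^ (1 / (1 - γ)) * φ z / ∫ w, F (y + w) ^ (1 / (1 - γ)) * φ w)
    (hqint : ∀ γ < (1:ℝ), Integrable (fun w => F (y + w) ^ (1 / (1 - γ)) * φ w))
    (hfint : ∀ γ < (1:ℝ), Integrable (fun z => Θhat (y + z) * q z γ))
    (f : ℝ → ℝ) (hf : ∀ γ < (1:ℝ), f γ = ∫ z, Θhat (y + z) * q z γ) :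
    (∀ γ < (1:ℝ), f γ < 0) ∧ AntitoneOn f (Set.Iio 1) := by
  have hTt : 0 < T - t := by linarith
  have hφpos : ∀ z, 0 < φ z := by
    intro z; rw [hφ]
    exact div_pos (exp_pos _) (Real.sqrt_pos.2 (by positivity))
  have hμ : μ ≠ 0 := IsProbabilityMeasure.ne_zero μ
  have hvol : (volume : Measure ℝ) ≠ 0 := by
    simp [← Measure.measure_univ_ne_zero]
  have hFpos : ∀ s, 0 < F s := by
    intro s; rw [hF]
    refine (integral_pos_iff_support_of_nonneg_ae
      (Filter.Eventually.of_forall fun θ => (exp_pos _).le) (hFint s)).2 ?_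
    have hs : (Function.support fun θ : ℝ => Real.exp (θ * s - θ ^ 2 * T / 2)) = Set.univ := by
      ext θ; simp [Function.mem_support, (exp_pos _).ne']
    rw [hs]
    simp [Measure.measure_univ_pos, hμ]
  have hNneg : ∀ s, (∫ θ, θ * Real.exp (θ * s - θ ^ 2 * T / 2) ∂μ) < 0 := fun s =>
    neg_integral hμ (hNint s) (hsupp.mono fun θ hθ => mul_neg_of_neg_of_pos hθ (exp_pos _))
  have hΘneg : ∀ s, Θhat s < 0 := fun s => by
    rw [hΘ]; exact div_neg_of_neg_of_pos (hNneg s) (hFpos s)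
  -- Θhat is monotone
  have hΘmono : Monotone Θhat := by
    intro s₁ s₂ hs
    have hd : 0 ≤ s₂ - s₁ := by linarith
    have eh : ∀ θ : ℝ, Real.exp (θ * (s₂ - s₁)) * Real.exp (θ * s₁ - θ ^ 2 * T / 2)
        = Real.exp (θ * s₂ - θ ^ 2 * T / 2) := by
      intro θ; rw [← Real.exp_add]; congr 1; ring
    have egh : ∀ θ : ℝ, θ * Real.exp (θ * (s₂ - s₁)) * Real.exp (θ * s₁ - θ ^ 2 * T / 2)
        = θ * Real.exp (θ * s₂ - θ ^ 2 * T / 2) := by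
      intro θ; rw [mul_assoc, eh]
    have i3 : Integrable (fun θ : ℝ =>
        Real.exp (θ * (s₂ - s₁)) * Real.exp (θ * s₁ - θ ^ 2 * T / 2)) μ := by
      simp_rw [eh]; exact hFint s₂
    have i4 : Integrable (fun θ : ℝ =>
        θ * Real.exp (θ * (s₂ - s₁)) * Real.exp (θ * s₁ - θ ^ 2 * T / 2)) μ := by
      simp_rw [egh]; exact hNint s₂
    have hkey := cheb μ (fun θ => θ) (fun θ => Real.exp (θ * (s₂ - s₁)))
      (fun θ => Real.exp (θ * s₁ - θ ^ 2 * T / 2))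
      (by
        intro a b
        rcases le_total a b with hab | hab
        · have h1 : Real.exp (a * (s₂ - s₁)) ≤ Real.exp (b * (s₂ - s₁)) :=
            Real.exp_le_exp.2 (by nlinarith)
          nlinarith
        · have h1 : Real.exp (b * (s₂ - s₁)) ≤ Real.exp (a * (s₂ - s₁)) :=
            Real.exp_le_exp.2 (by nlinarith)
          nlinarith)
      (hFint s₁) (hNint s₁) i3 i4 (fun θ => (exp_pos _).le)
    simp_rw [eh, egh] at hkey
    rw [hΘ s₁, hΘ s₂, div_le_div_iff₀ (hFpos s₁) (hFpos s₂), hF s₁, hF s₂]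
    exact hkey
  -- positivity of the normalizers
  have hNq : ∀ γ, γ < (1:ℝ) → 0 < ∫ w, F (y + w) ^ (1 / (1 - γ)) * φ w := by
    intro γ hγ
    refine (integral_pos_iff_support_of_nonneg_ae
      (Filter.Eventually.of_forall fun w =>
        (mul_pos (Real.rpow_pos_of_pos (hFpos _) _) (hφpos w)).le) (hqint γ hγ)).2 ?_
    have hs : (Function.support fun w : ℝ => F (y + w) ^ (1 / (1 - γ)) * φ w) = Set.univ := by
      ext w
      simp only [Function.mem_support, Set.mem_univ, iff_true]
      exact (mul_pos (Real.rpow_pos_of_pos (hFpos _) _) (hφpos w)).ne'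
    rw [hs]
    simp [Measure.measure_univ_pos, hvol]
  -- q is positive
  have hqpos : ∀ γ, γ < (1:ℝ) → ∀ z, 0 < q z γ := by
    intro γ hγ z
    rw [hq γ hγ]
    exact div_pos (mul_pos (Real.rpow_pos_of_pos (hFpos _) _) (hφpos z)) (hNq γ hγ)
  -- integrability of Θ * F^p * φ
  have hMint : ∀ γ, γ < (1:ℝ) →
      Integrable (fun z => Θhat (y + z) * (F (y + z) ^ (1 / (1 - γ)) * φ z)) := by
    intro γ hγ
    have hN : (∫ w, F (y + w) ^ (1 / (1 - γ)) * φ w) ≠ 0 := (hNq γ hγ).ne'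
    have e : ∀ z, Θhat (y + z) * (F (y + z) ^ (1 / (1 - γ)) * φ z)
        = (∫ w, F (y + w) ^ (1 / (1 - γ)) * φ w) * (Θhat (y + z) * q z γ) := by
      intro z
      rw [hq γ hγ z]
      field_simp
    simp_rw [e]
    exact (hfint γ hγ).const_mul _
  -- f γ = M γ / N γ
  have hfval : ∀ γ, γ < (1:ℝ) → f γ =
      (∫ z, Θhat (y + z) * (F (y + z) ^ (1 / (1 - γ)) * φ z))
        / ∫ w, F (y + w) ^ (1 / (1 - γ)) * φ w := by
    intro γ hγ
    rw [hf γ hγ]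
    have e : ∀ z, Θhat (y + z) * q z γ
        = Θhat (y + z) * (F (y + z) ^ (1 / (1 - γ)) * φ z)
          / ∫ w, F (y + w) ^ (1 / (1 - γ)) * φ w := by
      intro z; rw [hq γ hγ z]; ring
    simp_rw [e]
    rw [integral_div]
  constructor
  · intro γ hγ
    rw [hf γ hγ]
    exact neg_integral hvol (hfint γ hγ)
      (Filter.Eventually.of_forall fun z =>
        mul_neg_of_neg_of_pos (hΘneg _) (hqpos γ hγ z))
  · intro γ₁ hγ₁ γ₂ hγ₂ hle
    simp only [Set.mem_Iio] at hγ₁ hγ₂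
    have h1γ₁ : 0 < 1 - γ₁ := by linarith
    have h1γ₂ : 0 < 1 - γ₂ := by linarith
    have hpp : 1 / (1 - γ₁) ≤ 1 / (1 - γ₂) :=
      one_div_le_one_div_of_le h1γ₂ (by linarith)
    have hd : 0 ≤ 1 / (1 - γ₂) - 1 / (1 - γ₁) := by linarith
    -- shorthand
    have hrpow : ∀ z, F (y + z) ^ (1 / (1 - γ₂) - 1 / (1 - γ₁)) * F (y + z) ^ (1 / (1 - γ₁))
        = F (y + z) ^ (1 / (1 - γ₂)) := by
      intro z
      rw [← Real.rpow_add (hFpos _)]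
      congr 1; ring
    have eh : ∀ z, -F (y + z) ^ (1 / (1 - γ₂) - 1 / (1 - γ₁)) * (F (y + z) ^ (1 / (1 - γ₁)) * φ z)
        = -(F (y + z) ^ (1 / (1 - γ₂)) * φ z) := by
      intro z
      linear_combination (-φ z) * hrpow z
    have egh : ∀ z, Θhat (y + z) * -F (y + z) ^ (1 / (1 - γ₂) - 1 / (1 - γ₁))
        * (F (y + z) ^ (1 / (1 - γ₁)) * φ z)
        = -(Θhat (y + z) * (F (y + z) ^ (1 / (1 - γ₂)) * φ z)) := by
      intro z
      linear_combination (-(Θhat (y + z)) * φ z) * hrpow z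
    have i3 : Integrable (fun z =>
        -F (y + z) ^ (1 / (1 - γ₂) - 1 / (1 - γ₁)) * (F (y + z) ^ (1 / (1 - γ₁)) * φ z)) := by
      simp_rw [eh]; exact (hqint γ₂ hγ₂).neg
    have i4 : Integrable (fun z =>
        Θhat (y + z) * -F (y + z) ^ (1 / (1 - γ₂) - 1 / (1 - γ₁))
          * (F (y + z) ^ (1 / (1 - γ₁)) * φ z)) := by
      simp_rw [egh]; exact (hMint γ₂ hγ₂).neg
    have hkey := cheb volume (fun z => Θhat (y + z))
      (fun z => -F (y + z) ^ (1 / (1 - γ₂) - 1 / (1 - γ₁)))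
      (fun z => F (y + z) ^ (1 / (1 - γ₁)) * φ z)
      (by
        intro a b
        rcases le_total a b with hab | hab
        · have h1 : Θhat (y + a) ≤ Θhat (y + b) := hΘmono (by linarith)
          have h2 : F (y + b) ≤ F (y + a) := by
            rw [hF, hF]
            refine integral_mono_ae (hFint _) (hFint _) (hsupp.mono fun θ hθ => ?_)
            exact Real.exp_le_exp.2 (by nlinarith)
          have h3 : F (y + b) ^ (1 / (1 - γ₂) - 1 / (1 - γ₁))
              ≤ F (y + a) ^ (1 / (1 - γ₂) - 1 / (1 - γ₁)) :=
            Real.rpow_le_rpow (hFpos _).le h2 hd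
          nlinarith
        · have h1 : Θhat (y + b) ≤ Θhat (y + a) := hΘmono (by linarith)
          have h2 : F (y + a) ≤ F (y + b) := by
            rw [hF, hF]
            refine integral_mono_ae (hFint _) (hFint _) (hsupp.mono fun θ hθ => ?_)
            exact Real.exp_le_exp.2 (by nlinarith)
          have h3 : F (y + a) ^ (1 / (1 - γ₂) - 1 / (1 - γ₁))
              ≤ F (y + b) ^ (1 / (1 - γ₂) - 1 / (1 - γ₁)) :=
            Real.rpow_le_rpow (hFpos _).le h2 hd
          nlinarith)
      (hqint γ₁ hγ₁) (hMint γ₁ hγ₁) i3 i4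
      (fun z => (mul_pos (Real.rpow_pos_of_pos (hFpos _) _) (hφpos z)).le)
    simp_rw [eh, egh, integral_neg] at hkey
    rw [hfval γ₁ hγ₁, hfval γ₂ hγ₂, div_le_div_iff₀ (hNq γ₂ hγ₂) (hNq γ₁ hγ₁)]
    nlinarith [hkey]
end

section
/- (Representation of the posterior mean as a Gaussian average) For 0 ≤ t < T, y ∈ ℝ: Θ̂(t,y) = ∫_ℝ Θ̂(T,y+z) · [F(T,y+z) φ_{T−t}(z) / ∫ F(T,y+w) φ_{T−t}(w) dw] dz, where F and Θ̂ are defined from a probability measure μ with finite first moment as F(t,y)=∫exp(θy−θ²t/2)dμ(θ) and Θ̂(t,y)=∫θ exp(θy−θ²t/2)dμ(θ)/F(t,y). -/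
open MeasureTheory Real

open ProbabilityTheory


lemma aux_pdf_eq {v : ℝ} (hv : 0 < v) (a z : ℝ) :
    Real.exp (a*z) * (Real.exp (-z^2/(2*v)) / Real.sqrt (2*π*v))
      = Real.exp (a^2*v/2) * gaussianPDFReal (a*v) ⟨v, hv.le⟩ z := by
  simp only [gaussianPDFReal, NNReal.coe_mk]
  show _ = _ * ((Real.sqrt (2*π*v))⁻¹ * Real.exp (-(z - a*v)^2/(2*v)))
  rw [mul_comm ((Real.sqrt (2*π*v))⁻¹), ← mul_assoc, ← Real.exp_add,
    div_eq_mul_inv, ← mul_assoc, ← Real.exp_add]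
  congr 2
  field_simp
  ring

lemma aux_int (v : ℝ) (hv : 0 < v) (a : ℝ) :
    Integrable (fun z => Real.exp (a*z) * (Real.exp (-z^2/(2*v)) / Real.sqrt (2*π*v))) := by
  refine ((integrable_gaussianPDFReal (a*v) ⟨v, hv.le⟩).const_mul
    (Real.exp (a^2*v/2))).congr ?_
  exact Filter.Eventually.of_forall fun z => (aux_pdf_eq hv a z).symm

lemma aux_integral (v : ℝ) (hv : 0 < v) (a : ℝ) :
    ∫ z, Real.exp (a*z) * (Real.exp (-z^2/(2*v)) / Real.sqrt (2*π*v))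
      = Real.exp (a^2*v/2) := by
  have hne : (⟨v, hv.le⟩ : NNReal) ≠ 0 := by
    simp [← NNReal.coe_ne_zero, hv.ne']
  simp_rw [aux_pdf_eq hv a]
  rw [integral_const_mul, integral_gaussianPDFReal_eq_one (a*v) hne, mul_one]


/-- representation of the posterior mean as a Gaussian average:
`Θ̂(t,y) = ∫ Θ̂(T,y+z) · F(T,y+z) φ_{T-t}(z) dz / ∫ F(T,y+w) φ_{T-t}(w) dw`. -/
theorem stmt7 (μ : Measure ℝ) [IsProbabilityMeasure μ]
    (hmom : Integrable (fun θ : ℝ => |θ|) μ)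
    (T t y : ℝ) (ht : 0 ≤ t) (htT : t < T)
    (F Θhat : ℝ → ℝ → ℝ)
    (hF : ∀ s u, F s u = ∫ θ, Real.exp (θ * u - θ ^ 2 * s / 2) ∂μ)
    (hΘ : ∀ s u, Θhat s u =
      (∫ θ, θ * Real.exp (θ * u - θ ^ 2 * s / 2) ∂μ) / F s u)
    (hFint : ∀ s u, Integrable (fun θ : ℝ => Real.exp (θ * u - θ ^ 2 * s / 2)) μ)
    (hNint : ∀ s u, Integrable (fun θ : ℝ => θ * Real.exp (θ * u - θ ^ 2 * s / 2)) μ)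
    (φ : ℝ → ℝ)
    (hφ : ∀ z, φ z = Real.exp (-z ^ 2 / (2 * (T - t))) / Real.sqrt (2 * π * (T - t)))
    (hint1 : Integrable (fun z => Θhat T (y + z) * (F T (y + z) * φ z)))
    (hint2 : Integrable (fun w => F T (y + w) * φ w)) :
    Θhat t y = ∫ z, Θhat T (y + z) *
      (F T (y + z) * φ z / ∫ w, F T (y + w) * φ w) := by
  have hv : (0:ℝ) < T - t := sub_pos.2 htT
  have hφpos : ∀ z, 0 < φ z := by
    intro z; rw [hφ]
    have h2 : (0:ℝ) < 2 * π * (T - t) := by positivity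
    positivity
  -- pointwise decomposition of the exponential
  have hsplit : ∀ θ z : ℝ, Real.exp (θ * (y + z) - θ ^ 2 * T / 2) * φ z
      = Real.exp (θ * y - θ ^ 2 * T / 2) *
        (Real.exp (θ * z) * (Real.exp (-z^2/(2*(T-t))) / Real.sqrt (2*π*(T-t)))) := by
    intro θ z
    rw [hφ, show θ * (y + z) - θ ^ 2 * T / 2 = (θ * y - θ ^ 2 * T / 2) + θ * z from by ring,
      Real.exp_add, mul_assoc]
  -- per-θ integral over z
  have hA : ∀ θ : ℝ, ∫ z, Real.exp (θ * (y + z) - θ ^ 2 * T / 2) * φ z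
      = Real.exp (θ * y - θ ^ 2 * t / 2) := by
    intro θ
    simp_rw [hsplit θ]
    rw [integral_const_mul, aux_integral (T-t) hv θ, ← Real.exp_add]
    congr 1; ring
  have hsec : ∀ θ : ℝ, Integrable (fun z => Real.exp (θ * (y + z) - θ ^ 2 * T / 2) * φ z) := by
    intro θ
    exact (((aux_int (T-t) hv θ).const_mul _).congr
      (Filter.Eventually.of_forall fun z => (hsplit θ z).symm))
  -- measurability on the product
  have hcont : Continuous (fun p : ℝ × ℝ =>
      Real.exp (p.1 * (y + p.2) - p.1 ^ 2 * T / 2) *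
        (Real.exp (-p.2^2/(2*(T-t))) / Real.sqrt (2*π*(T-t)))) := by
    fun_prop
  have hmeas1 : AEStronglyMeasurable (fun p : ℝ × ℝ =>
      Real.exp (p.1 * (y + p.2) - p.1 ^ 2 * T / 2) * φ p.2) (μ.prod volume) := by
    refine hcont.aestronglyMeasurable.congr ?_
    exact Filter.Eventually.of_forall fun p => by simp only [hφ]
  -- product integrability (denominator)
  have hprod1 : Integrable (fun p : ℝ × ℝ =>
      Real.exp (p.1 * (y + p.2) - p.1 ^ 2 * T / 2) * φ p.2) (μ.prod volume) := by
    rw [integrable_prod_iff hmeas1]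
    constructor
    · exact Filter.Eventually.of_forall fun θ => hsec θ
    · refine (hFint t y).congr (Filter.Eventually.of_forall fun θ => ?_)
      show Real.exp (θ * y - θ ^ 2 * t / 2)
        = ∫ z, ‖Real.exp (θ * (y + z) - θ ^ 2 * T / 2) * φ z‖
      rw [← hA θ]
      congr 1; funext z
      rw [Real.norm_eq_abs,
        abs_of_nonneg (mul_nonneg (Real.exp_pos _).le (hφpos z).le)]
  -- product integrability (numerator)
  have hmeas2 : AEStronglyMeasurable (fun p : ℝ × ℝ =>
      p.1 * (Real.exp (p.1 * (y + p.2) - p.1 ^ 2 * T / 2) * φ p.2)) (μ.prod volume) := by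
    refine ((continuous_fst.mul hcont).aestronglyMeasurable).congr ?_
    exact Filter.Eventually.of_forall fun p => by simp only [hφ, Pi.mul_apply]
  have hprod2 : Integrable (fun p : ℝ × ℝ =>
      p.1 * (Real.exp (p.1 * (y + p.2) - p.1 ^ 2 * T / 2) * φ p.2)) (μ.prod volume) := by
    rw [integrable_prod_iff hmeas2]
    constructor
    · exact Filter.Eventually.of_forall fun θ => (hsec θ).const_mul θ
    · refine ((hNint t y).abs.congr (Filter.Eventually.of_forall fun θ => ?_))
      show |θ * Real.exp (θ * y - θ ^ 2 * t / 2)|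
        = ∫ z, ‖θ * (Real.exp (θ * (y + z) - θ ^ 2 * T / 2) * φ z)‖
      have hz : ∀ z : ℝ, ‖θ * (Real.exp (θ * (y + z) - θ ^ 2 * T / 2) * φ z)‖
          = |θ| * (Real.exp (θ * (y + z) - θ ^ 2 * T / 2) * φ z) := by
        intro z
        rw [Real.norm_eq_abs, abs_mul,
          abs_of_nonneg (mul_nonneg (Real.exp_pos _).le (hφpos z).le)]
      simp_rw [hz]
      rw [integral_const_mul, hA θ, abs_mul, abs_of_pos (Real.exp_pos _)]
  -- positivity of F
  have hFpos : ∀ s u : ℝ, 0 < F s u := by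
    intro s u
    rw [hF]
    rw [integral_pos_iff_support_of_nonneg (fun θ => (Real.exp_pos _).le) (hFint s u)]
    have : Function.support (fun θ : ℝ => Real.exp (θ * u - θ ^ 2 * s / 2)) = Set.univ := by
      ext θ; simp [Function.mem_support, (Real.exp_pos _).ne']
    rw [this]
    simp
  -- denominator
  have hD : ∫ w, F T (y + w) * φ w = F t y := by
    have step1 : ∫ w, F T (y + w) * φ w
        = ∫ w, ∫ θ, Real.exp (θ * (y + w) - θ ^ 2 * T / 2) * φ w ∂μ := by
      congr 1; funext w
      rw [hF, ← integral_mul_const]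
    rw [step1, ← integral_integral_swap hprod1]
    simp_rw [hA]
    exact (hF t y).symm
  -- numerator
  have hE : ∀ u : ℝ, Θhat T u * F T u = ∫ θ, θ * Real.exp (θ * u - θ ^ 2 * T / 2) ∂μ := by
    intro u
    rw [hΘ, div_mul_cancel₀ _ (hFpos T u).ne']
  have hB : ∀ θ : ℝ, ∫ z, θ * (Real.exp (θ * (y + z) - θ ^ 2 * T / 2) * φ z)
      = θ * Real.exp (θ * y - θ ^ 2 * t / 2) := by
    intro θ
    rw [integral_const_mul, hA θ]
  have hN : ∫ z, Θhat T (y + z) * (F T (y + z) * φ z)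
      = ∫ θ, θ * Real.exp (θ * y - θ ^ 2 * t / 2) ∂μ := by
    have step1 : ∫ z, Θhat T (y + z) * (F T (y + z) * φ z)
        = ∫ z, ∫ θ, θ * (Real.exp (θ * (y + z) - θ ^ 2 * T / 2) * φ z) ∂μ := by
      congr 1; funext z
      rw [← mul_assoc, hE (y + z), ← integral_mul_const]
      congr 1; funext θ
      ring
    rw [step1, ← integral_integral_swap hprod2]
    simp_rw [hB]
  -- conclusion
  have hrw : (fun z => Θhat T (y + z) * (F T (y + z) * φ z / ∫ w, F T (y + w) * φ w))
      = fun z => (Θhat T (y + z) * (F T (y + z) * φ z)) / ∫ w, F T (y + w) * φ w := by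
    funext z; ring
  rw [hrw, integral_div, hN, hD, hΘ t y]
end

section
/- (Gaussian case: portfolio ratio is increasing in γ) For fixed v > 0, T > 0, t ∈ [0,T), the function R(γ) := (1−γ)(1+tv²)/((1−γ) − γv²T + v²t), defined for γ < (1+v²t)/(1+v²T), is positive, equals 1 at γ = 0, and is strictly monotone increasing in γ. -/
open Set

/-- Gaussian case, the portfolio ratio
`R(γ) = (1-γ)(1+tv²)/((1-γ) - γv²T + v²t)`, defined for
`γ < (1+v²t)/(1+v²T)`, is positive, equals 1 at `γ = 0`, and is strictly
monotone increasing. -/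
theorem stmt15 (v T t : ℝ) (hv : 0 < v) (hT : 0 < T) (ht : 0 ≤ t) (htT : t < T)
    (R : ℝ → ℝ)
    (hR : ∀ γ ∈ Iio ((1 + v ^ 2 * t) / (1 + v ^ 2 * T)),
      R γ = (1 - γ) * (1 + t * v ^ 2) / ((1 - γ) - γ * v ^ 2 * T + v ^ 2 * t)) :
    (∀ γ ∈ Iio ((1 + v ^ 2 * t) / (1 + v ^ 2 * T)), 0 < R γ) ∧
    R 0 = 1 ∧
    StrictMonoOn R (Iio ((1 + v ^ 2 * t) / (1 + v ^ 2 * T))) := by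
  have hL : 0 < 1 + v ^ 2 * T := by positivity
  have hden : ∀ γ ∈ Iio ((1 + v ^ 2 * t) / (1 + v ^ 2 * T)),
      0 < (1 - γ) - γ * v ^ 2 * T + v ^ 2 * t := by
    intro γ hγ
    have h := (lt_div_iff₀ hL).mp hγ
    nlinarith
  have hnum : ∀ γ ∈ Iio ((1 + v ^ 2 * t) / (1 + v ^ 2 * T)),
      0 < (1 - γ) * (1 + t * v ^ 2) := by
    intro γ hγ
    have hc : (1 + v ^ 2 * t) / (1 + v ^ 2 * T) ≤ 1 := by
      rw [div_le_one hL]; nlinarith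
    have h1 : γ < 1 := lt_of_lt_of_le hγ hc
    have h2 : 0 < 1 + t * v ^ 2 := by positivity
    nlinarith
  refine ⟨?_, ?_, ?_⟩
  · intro γ hγ
    rw [hR γ hγ]
    exact div_pos (hnum γ hγ) (hden γ hγ)
  · have h0 : (0 : ℝ) ∈ Iio ((1 + v ^ 2 * t) / (1 + v ^ 2 * T)) := by
      simp only [mem_Iio]; positivity
    rw [hR 0 h0, div_eq_one_iff_eq (ne_of_gt (hden 0 h0))]
    ring
  · intro a ha b hb hab
    rw [hR a ha, hR b hb, div_lt_div_iff₀ (hden a ha) (hden b hb)]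
    have key : 0 < (b - a) * (v ^ 2 * (T - t)) :=
      mul_pos (sub_pos.mpr hab) (mul_pos (pow_pos hv 2) (sub_pos.mpr htT))
    have h2 : 0 < 1 + t * v ^ 2 := by positivity
    nlinarith [mul_pos key h2]
end

section
/- (Sign and ordering of portfolios, CRRA case) Assume μ is supported on (0,∞) with finite first moment. For t ∈ [0,T), y ∈ ℝ, x > 0, the partial-observation portfolio π̂_γ = (x/(σ(1−γ))) ∫Θ̂(T,y+z)q(z;γ)dz and myopic portfolio π^m_γ = (x/(σ(1−γ)))Θ̂(t,y) are both positive, and π̂_γ ≥ π^m_γ if 0 < γ < 1, while π̂_γ ≤ π^m_γ if γ < 0. -/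
open MeasureTheory Real


private lemma intpos {ν : Measure ℝ} {f : ℝ → ℝ} (hν : ν ≠ 0)
    (hf : Integrable f ν) (h0 : ∀ᵐ z ∂ν, 0 < f z) : 0 < ∫ z, f z ∂ν := by
  haveI : (ae ν).NeBot := ae_neBot.mpr hν
  rw [integral_pos_iff_support_of_nonneg_ae (h0.mono fun z hz => hz.le) hf, pos_iff_ne_zero]
  intro hzero
  have h1 : ∀ᵐ z ∂ν, f z = 0 := by
    rw [ae_iff]
    simpa [Function.support] using hzero
  obtain ⟨z, hz1, hz2⟩ := (h0.and h1).exists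
  exact hz1.ne' hz2

private lemma corr {ν : Measure ℝ} [SigmaFinite ν] {a b c d : ℝ → ℝ}
    (ha : Integrable a ν) (hb : Integrable b ν) (hc : Integrable c ν) (hd : Integrable d ν)
    (hpt : ∀ z w, a z * b w + a w * b z ≤ c z * d w + c w * d z) :
    (∫ z, a z ∂ν) * (∫ z, b z ∂ν) ≤ (∫ z, c z ∂ν) * (∫ z, d z ∂ν) := by
  have key : ∫ p : ℝ × ℝ, (a p.1 * b p.2 + b p.1 * a p.2) ∂(ν.prod ν)
      ≤ ∫ p : ℝ × ℝ, (c p.1 * d p.2 + d p.1 * c p.2) ∂(ν.prod ν) := by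
    refine integral_mono ((ha.mul_prod hb).add (hb.mul_prod ha))
      ((hc.mul_prod hd).add (hd.mul_prod hc)) fun p => ?_
    have h := hpt p.1 p.2
    dsimp only
    nlinarith [hpt p.1 p.2]
  rw [integral_add (ha.mul_prod hb) (hb.mul_prod ha),
      integral_add (hc.mul_prod hd) (hd.mul_prod hc),
      integral_prod_mul, integral_prod_mul, integral_prod_mul, integral_prod_mul] at key
  nlinarith [key]


private lemma ptwise1 {u₁ u₂ Tc : ℝ} (hu : u₁ ≤ u₂) (z w : ℝ) :
    z * Real.exp (z * u₁ - z ^ 2 * Tc / 2) * Real.exp (w * u₂ - w ^ 2 * Tc / 2)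
      + w * Real.exp (w * u₁ - w ^ 2 * Tc / 2) * Real.exp (z * u₂ - z ^ 2 * Tc / 2)
    ≤ z * Real.exp (z * u₂ - z ^ 2 * Tc / 2) * Real.exp (w * u₁ - w ^ 2 * Tc / 2)
      + w * Real.exp (w * u₂ - w ^ 2 * Tc / 2) * Real.exp (z * u₁ - z ^ 2 * Tc / 2) := by
  have key : ∀ p q : ℝ, Real.exp p * Real.exp q = Real.exp (p + q) :=
    fun p q => (Real.exp_add p q).symm
  simp only [mul_assoc, key]
  have e1 : z * u₁ - z ^ 2 * Tc / 2 + (w * u₂ - w ^ 2 * Tc / 2)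
      = (z * u₁ + w * u₁ - z ^ 2 * Tc / 2 - w ^ 2 * Tc / 2) + (u₂ - u₁) * w := by ring
  have e2 : w * u₁ - w ^ 2 * Tc / 2 + (z * u₂ - z ^ 2 * Tc / 2)
      = (z * u₁ + w * u₁ - z ^ 2 * Tc / 2 - w ^ 2 * Tc / 2) + (u₂ - u₁) * z := by ring
  have e3 : z * u₂ - z ^ 2 * Tc / 2 + (w * u₁ - w ^ 2 * Tc / 2)
      = (z * u₁ + w * u₁ - z ^ 2 * Tc / 2 - w ^ 2 * Tc / 2) + (u₂ - u₁) * z := by ring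
  have e4 : w * u₂ - w ^ 2 * Tc / 2 + (z * u₁ - z ^ 2 * Tc / 2)
      = (z * u₁ + w * u₁ - z ^ 2 * Tc / 2 - w ^ 2 * Tc / 2) + (u₂ - u₁) * w := by ring
  rw [e1, e2, e3, e4, Real.exp_add, Real.exp_add]
  set W := Real.exp (z * u₁ + w * u₁ - z ^ 2 * Tc / 2 - w ^ 2 * Tc / 2) with hW
  set E1 := Real.exp ((u₂ - u₁) * z) with hE1
  set E2 := Real.exp ((u₂ - u₁) * w) with hE2
  have hWpos : 0 < W := Real.exp_pos _
  have hE : 0 ≤ (z - w) * (E1 - E2) := by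
    rcases le_total z w with h | h
    · have hle : E1 ≤ E2 := by
        rw [hE1, hE2]
        exact Real.exp_le_exp.mpr (by nlinarith)
      nlinarith
    · have hle : E2 ≤ E1 := by
        rw [hE1, hE2]
        exact Real.exp_le_exp.mpr (by nlinarith)
      nlinarith
  nlinarith [mul_nonneg hE hWpos.le]

private lemma ptwise2 {a g1 g2 f1 f2 p1 p2 : ℝ} (hf1 : 0 < f1) (hf2 : 0 < f2)
    (hp1 : 0 ≤ p1) (hp2 : 0 ≤ p2)
    (hsign : 0 ≤ (g1 - g2) * (f1 ^ (a - 1) - f2 ^ (a - 1))) :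
    g1 * f1 * p1 * (f2 ^ a * p2) + g2 * f2 * p2 * (f1 ^ a * p1)
      ≤ g1 * (f1 ^ a * p1) * (f2 * p2) + g2 * (f2 ^ a * p2) * (f1 * p1) := by
  have e1 : f1 ^ a = f1 * f1 ^ (a - 1) := by
    have h := Real.rpow_add hf1 1 (a - 1)
    rw [show (1 : ℝ) + (a - 1) = a by ring, Real.rpow_one] at h
    exact h
  have e2 : f2 ^ a = f2 * f2 ^ (a - 1) := by
    have h := Real.rpow_add hf2 1 (a - 1)
    rw [show (1 : ℝ) + (a - 1) = a by ring, Real.rpow_one] at h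
    exact h
  rw [e1, e2]
  nlinarith [mul_nonneg hsign (by positivity : (0:ℝ) ≤ f1 * f2 * p1 * p2)]

private lemma ptwise2' {a g1 g2 f1 f2 p1 p2 : ℝ} (hf1 : 0 < f1) (hf2 : 0 < f2)
    (hp1 : 0 ≤ p1) (hp2 : 0 ≤ p2)
    (hsign : 0 ≤ (g1 - g2) * (f2 ^ (a - 1) - f1 ^ (a - 1))) :
    g1 * (f1 ^ a * p1) * (f2 * p2) + g2 * (f2 ^ a * p2) * (f1 * p1)
      ≤ g1 * f1 * p1 * (f2 ^ a * p2) + g2 * f2 * p2 * (f1 ^ a * p1) := by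
  have e1 : f1 ^ a = f1 * f1 ^ (a - 1) := by
    have h := Real.rpow_add hf1 1 (a - 1)
    rw [show (1 : ℝ) + (a - 1) = a by ring, Real.rpow_one] at h
    exact h
  have e2 : f2 ^ a = f2 * f2 ^ (a - 1) := by
    have h := Real.rpow_add hf2 1 (a - 1)
    rw [show (1 : ℝ) + (a - 1) = a by ring, Real.rpow_one] at h
    exact h
  rw [e1, e2]
  nlinarith [mul_nonneg hsign (by positivity : (0:ℝ) ≤ f1 * f2 * p1 * p2)]

private lemma gauss_mgf {s : ℝ} (hs : 0 < s) (c : ℝ) :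
    ∫ z : ℝ, Real.exp (c * z) * (Real.exp (-z ^ 2 / (2 * s)) / Real.sqrt (2 * π * s))
      = Real.exp (s * c ^ 2 / 2) := by
  have hb : 0 < 1 / (2 * s) := by positivity
  have hrw : ∀ z : ℝ, Real.exp (c * z) * (Real.exp (-z ^ 2 / (2 * s)) / Real.sqrt (2 * π * s))
      = Real.exp (-(1 / (2 * s)) * (z + -(s * c)) ^ 2)
          * (Real.exp (s * c ^ 2 / 2) / Real.sqrt (2 * π * s)) := by
    intro z
    rw [← mul_div_assoc, ← mul_div_assoc, ← Real.exp_add, ← Real.exp_add]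
    congr 2
    field_simp
    ring
  simp_rw [hrw]
  rw [integral_mul_const,
    integral_add_right_eq_self (fun z : ℝ => Real.exp (-(1 / (2 * s)) * z ^ 2)) (-(s * c)),
    integral_gaussian]
  rw [show π / (1 / (2 * s)) = 2 * π * s by field_simp]
  rw [mul_div_assoc']
  rw [mul_comm, mul_div_assoc, div_self (by positivity : Real.sqrt (2 * π * s) ≠ 0), mul_one]

private lemma fubini_aux (μ : Measure ℝ) [IsProbabilityMeasure μ] {T t y : ℝ} (htT : t < T)
    (h : ℝ → ℝ) (hh : Continuous h) (hnn : ∀ᵐ θ ∂μ, 0 ≤ h θ)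
    (hintT : ∀ u : ℝ, Integrable (fun θ : ℝ => h θ * Real.exp (θ * u - θ ^ 2 * T / 2)) μ)
    (hout : Integrable (fun z : ℝ =>
      (∫ θ, h θ * Real.exp (θ * (y + z) - θ ^ 2 * T / 2) ∂μ) *
        (Real.exp (-z ^ 2 / (2 * (T - t))) / Real.sqrt (2 * π * (T - t)))) volume) :
    (∫ z : ℝ, (∫ θ, h θ * Real.exp (θ * (y + z) - θ ^ 2 * T / 2) ∂μ) *
        (Real.exp (-z ^ 2 / (2 * (T - t))) / Real.sqrt (2 * π * (T - t))))
      = ∫ θ, h θ * Real.exp (θ * y - θ ^ 2 * t / 2) ∂μ := by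
  have hs : 0 < T - t := sub_pos.mpr htT
  have hsq : 0 < Real.sqrt (2 * π * (T - t)) := Real.sqrt_pos.mpr (by nlinarith [Real.pi_pos])
  set f : ℝ → ℝ → ℝ := fun z θ => h θ * Real.exp (θ * (y + z) - θ ^ 2 * T / 2) *
      (Real.exp (-z ^ 2 / (2 * (T - t))) / Real.sqrt (2 * π * (T - t))) with hf
  have hcont : Continuous (Function.uncurry f) := by
    simp only [hf, Function.uncurry]
    fun_prop
  have hsec : ∀ z : ℝ, Integrable (fun θ => f z θ) μ := fun z => (hintT (y + z)).mul_const _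
  have hint : Integrable (Function.uncurry f) (volume.prod μ) := by
    refine (integrable_prod_iff hcont.aestronglyMeasurable).mpr
      ⟨Filter.Eventually.of_forall hsec, ?_⟩
    refine hout.congr (Filter.Eventually.of_forall fun z => ?_)
    dsimp only [Function.uncurry_apply_pair]
    rw [← integral_mul_const]
    refine integral_congr_ae ?_
    filter_upwards [hnn] with θ hθ
    rw [Real.norm_eq_abs, abs_of_nonneg]
    have h1 := Real.exp_pos (θ * (y + z) - θ ^ 2 * T / 2)
    have h2 := Real.exp_pos (-z ^ 2 / (2 * (T - t)))
    positivity
  calc (∫ z : ℝ, (∫ θ, h θ * Real.exp (θ * (y + z) - θ ^ 2 * T / 2) ∂μ) *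
        (Real.exp (-z ^ 2 / (2 * (T - t))) / Real.sqrt (2 * π * (T - t))))
      = ∫ z : ℝ, ∫ θ, f z θ ∂μ :=
        integral_congr_ae (Filter.Eventually.of_forall fun z => (integral_mul_const _ _).symm)
    _ = ∫ θ, (∫ z : ℝ, f z θ) ∂μ := integral_integral_swap hint
    _ = ∫ θ, h θ * Real.exp (θ * y - θ ^ 2 * t / 2) ∂μ := by
        refine integral_congr_ae (Filter.Eventually.of_forall fun θ => ?_)
        have hzeq : ∀ z : ℝ, f z θ = (h θ * Real.exp (θ * y - θ ^ 2 * T / 2)) *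
            (Real.exp (θ * z) * (Real.exp (-z ^ 2 / (2 * (T - t))) / Real.sqrt (2 * π * (T - t)))) := by
          intro z
          simp only [hf]
          rw [show Real.exp (θ * (y + z) - θ ^ 2 * T / 2)
              = Real.exp (θ * y - θ ^ 2 * T / 2) * Real.exp (θ * z) by
            rw [← Real.exp_add]; congr 1; ring]
          ring
        simp_rw [hzeq]
        rw [integral_const_mul, gauss_mgf hs θ, mul_assoc, ← Real.exp_add]
        congr 2
        ring

/-- sign and ordering of portfolios in the CRRA case. With μ
supported on `(0,∞)`, `x > 0`, `σ > 0`, the partial-observation portfolio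
`π̂_γ = (x/(σ(1-γ))) ∫ Θ̂(T,y+z) q(z;γ) dz` and the myopic portfolio
`π^m_γ = (x/(σ(1-γ))) Θ̂(t,y)` are both positive, with `π̂_γ ≥ π^m_γ` when
`0 < γ < 1` and `π̂_γ ≤ π^m_γ` when `γ < 0`. -/
theorem stmt17 (μ : Measure ℝ) [IsProbabilityMeasure μ]
    (hsupp : ∀ᵐ θ ∂μ, 0 < θ)
    (hmom : Integrable (fun θ : ℝ => |θ|) μ)
    (T t y x σ : ℝ) (ht : 0 ≤ t) (htT : t < T) (hx : 0 < x) (hσ : 0 < σ)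
    (F Θhat : ℝ → ℝ → ℝ)
    (hF : ∀ s u, F s u = ∫ θ, Real.exp (θ * u - θ ^ 2 * s / 2) ∂μ)
    (hΘ : ∀ s u, Θhat s u =
      (∫ θ, θ * Real.exp (θ * u - θ ^ 2 * s / 2) ∂μ) / F s u)
    (hFint : ∀ s u, Integrable (fun θ : ℝ => Real.exp (θ * u - θ ^ 2 * s / 2)) μ)
    (hNint : ∀ s u, Integrable (fun θ : ℝ => θ * Real.exp (θ * u - θ ^ 2 * s / 2)) μ)
    (φ : ℝ → ℝ)
    (hφ : ∀ z, φ z = Real.exp (-z ^ 2 / (2 * (T - t))) / Real.sqrt (2 * π * (T - t)))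
    (q : ℝ → ℝ → ℝ)
    (hq : ∀ γ < (1:ℝ), ∀ z, q z γ =
      F T (y + z) ^ (1 / (1 - γ)) * φ z / ∫ w, F T (y + w) ^ (1 / (1 - γ)) * φ w)
    (hqint : ∀ γ < (1:ℝ), Integrable (fun w => F T (y + w) ^ (1 / (1 - γ)) * φ w))
    (hfint : ∀ γ < (1:ℝ), Integrable (fun z => Θhat T (y + z) * q z γ))
    (πhat πm : ℝ → ℝ)
    (hπhat : ∀ γ < (1:ℝ), πhat γ =
      x / (σ * (1 - γ)) * ∫ z, Θhat T (y + z) * q z γ)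
    (hπm : ∀ γ < (1:ℝ), πm γ = x / (σ * (1 - γ)) * Θhat t y) :
    (∀ γ < (1:ℝ), 0 < πhat γ ∧ 0 < πm γ) ∧
    (∀ γ : ℝ, 0 < γ → γ < 1 → πm γ ≤ πhat γ) ∧
    (∀ γ : ℝ, γ < 0 → πhat γ ≤ πm γ) := by
  have hπpos := Real.pi_pos
  have hprob : μ ≠ 0 := IsProbabilityMeasure.ne_zero μ
  have hvol : (volume : Measure ℝ) ≠ 0 := Measure.measure_univ_ne_zero.mp (by simp)
  have hs : 0 < T - t := sub_pos.mpr htT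
  have hsq : 0 < Real.sqrt (2 * π * (T - t)) := Real.sqrt_pos.mpr (by nlinarith)
  have hφpos : ∀ z, 0 < φ z := fun z => by
    rw [hφ z]; exact div_pos (Real.exp_pos _) hsq
  have hFpos : ∀ s u, 0 < F s u := fun s u => by
    rw [hF s u]
    exact intpos hprob (hFint s u) (Filter.Eventually.of_forall fun θ => Real.exp_pos _)
  have hNpos : ∀ s u, 0 < ∫ θ, θ * Real.exp (θ * u - θ ^ 2 * s / 2) ∂μ := fun s u =>
    intpos hprob (hNint s u) (hsupp.mono fun θ hθ => mul_pos hθ (Real.exp_pos _))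
  have hΘpos : ∀ s u, 0 < Θhat s u := fun s u => by
    rw [hΘ s u]; exact div_pos (hNpos s u) (hFpos s u)
  have hNeq : ∀ u, (∫ θ, θ * Real.exp (θ * u - θ ^ 2 * T / 2) ∂μ) = Θhat T u * F T u := fun u => by
    rw [hΘ T u, div_mul_cancel₀ _ (hFpos T u).ne']
  have hΘmono : ∀ u₁ u₂ : ℝ, u₁ ≤ u₂ → Θhat T u₁ ≤ Θhat T u₂ := by
    intro u₁ u₂ hu
    rw [hΘ T u₁, hΘ T u₂, div_le_div_iff₀ (hFpos T u₁) (hFpos T u₂), hF T u₂, hF T u₁]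
    exact corr (hNint T u₁) (hFint T u₂) (hNint T u₂) (hFint T u₁) (ptwise1 hu)
  have hFmono : ∀ u₁ u₂ : ℝ, u₁ ≤ u₂ → F T u₁ ≤ F T u₂ := by
    intro u₁ u₂ hu
    rw [hF T u₁, hF T u₂]
    refine integral_mono_ae (hFint T u₁) (hFint T u₂) ?_
    filter_upwards [hsupp] with θ hθ
    exact Real.exp_le_exp.mpr (by nlinarith)
  have hFφint : Integrable (fun z => F T (y + z) * φ z) := by
    refine (hqint 0 (by norm_num)).congr (Filter.Eventually.of_forall fun w => ?_)
    simp only [show (1:ℝ) / (1 - 0) = 1 by norm_num, Real.rpow_one]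
  have I1 : (∫ z, F T (y + z) * φ z) = F t y := by
    have hout : Integrable (fun z : ℝ =>
        (∫ θ, (1:ℝ) * Real.exp (θ * (y + z) - θ ^ 2 * T / 2) ∂μ) *
          (Real.exp (-z ^ 2 / (2 * (T - t))) / Real.sqrt (2 * π * (T - t)))) volume := by
      refine hFφint.congr (Filter.Eventually.of_forall fun z => ?_)
      dsimp only
      rw [hF T (y + z), hφ z]
      simp only [one_mul]
    have H := fubini_aux μ htT (fun _ : ℝ => (1:ℝ)) continuous_const
      (Filter.Eventually.of_forall fun _ => zero_le_one)
      (fun u => by simpa only [one_mul] using hFint T u) hout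
    rw [hF t y]
    calc (∫ z, F T (y + z) * φ z)
        = ∫ z : ℝ, (∫ θ, (1:ℝ) * Real.exp (θ * (y + z) - θ ^ 2 * T / 2) ∂μ) *
            (Real.exp (-z ^ 2 / (2 * (T - t))) / Real.sqrt (2 * π * (T - t))) := by
          refine integral_congr_ae (Filter.Eventually.of_forall fun z => ?_)
          dsimp only
          rw [hF T (y + z), hφ z]; simp only [one_mul]
      _ = ∫ θ, (1:ℝ) * Real.exp (θ * y - θ ^ 2 * t / 2) ∂μ := H
      _ = ∫ θ, Real.exp (θ * y - θ ^ 2 * t / 2) ∂μ := by simp only [one_mul]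
  have hFty : 0 < ∫ z, F T (y + z) * φ z := by rw [I1]; exact hFpos t y
  have hNφint : Integrable
      (fun z => (∫ θ, θ * Real.exp (θ * (y + z) - θ ^ 2 * T / 2) ∂μ) * φ z) := by
    have h0 := (hfint 0 (by norm_num)).const_mul (∫ w, F T (y + w) ^ ((1:ℝ) / (1 - 0)) * φ w)
    refine h0.congr (Filter.Eventually.of_forall fun z => ?_)
    dsimp only
    rw [hq 0 (by norm_num) z, hNeq (y + z)]
    simp only [show (1:ℝ) / (1 - 0) = 1 by norm_num, Real.rpow_one]
    field_simp
  have I2 : (∫ z, (∫ θ, θ * Real.exp (θ * (y + z) - θ ^ 2 * T / 2) ∂μ) * φ z)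
      = ∫ θ, θ * Real.exp (θ * y - θ ^ 2 * t / 2) ∂μ := by
    have hout : Integrable (fun z : ℝ =>
        (∫ θ, θ * Real.exp (θ * (y + z) - θ ^ 2 * T / 2) ∂μ) *
          (Real.exp (-z ^ 2 / (2 * (T - t))) / Real.sqrt (2 * π * (T - t)))) volume := by
      refine hNφint.congr (Filter.Eventually.of_forall fun z => ?_)
      dsimp only
      rw [hφ z]
    have H := fubini_aux μ htT (fun θ : ℝ => θ) continuous_id
      (hsupp.mono fun θ hθ => hθ.le) (fun u => hNint T u) hout
    calc (∫ z, (∫ θ, θ * Real.exp (θ * (y + z) - θ ^ 2 * T / 2) ∂μ) * φ z)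
        = ∫ z : ℝ, (∫ θ, θ * Real.exp (θ * (y + z) - θ ^ 2 * T / 2) ∂μ) *
            (Real.exp (-z ^ 2 / (2 * (T - t))) / Real.sqrt (2 * π * (T - t))) := by
          refine integral_congr_ae (Filter.Eventually.of_forall fun z => ?_)
          dsimp only
          rw [hφ z]
      _ = ∫ θ, θ * Real.exp (θ * y - θ ^ 2 * t / 2) ∂μ := H
  have hKpos : ∀ γ : ℝ, γ < 1 → 0 < x / (σ * (1 - γ)) := fun γ hγ =>
    div_pos hx (mul_pos hσ (by linarith))
  have hDpos : ∀ γ : ℝ, γ < 1 → 0 < ∫ w, F T (y + w) ^ (1 / (1 - γ)) * φ w := fun γ hγ =>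
    intpos hvol (hqint γ hγ) (Filter.Eventually.of_forall fun w =>
      mul_pos (Real.rpow_pos_of_pos (hFpos T (y + w)) _) (hφpos w))
  have hIcint : ∀ γ : ℝ, γ < 1 →
      Integrable (fun z => Θhat T (y + z) * (F T (y + z) ^ (1 / (1 - γ)) * φ z)) := by
    intro γ hγ
    refine ((hfint γ hγ).const_mul (∫ w, F T (y + w) ^ (1 / (1 - γ)) * φ w)).congr
      (Filter.Eventually.of_forall fun z => ?_)
    dsimp only
    rw [hq γ hγ z]
    field_simp
    have := mul_div_cancel_left₀ (Θhat T (y + z) * F T (y + z) ^ (1 / (1 - γ)) * φ z) (hDpos γ hγ).ne'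
    simpa only [mul_assoc] using this
  have hIcpos : ∀ γ : ℝ, γ < 1 →
      0 < ∫ z, Θhat T (y + z) * (F T (y + z) ^ (1 / (1 - γ)) * φ z) := fun γ hγ =>
    intpos hvol (hIcint γ hγ) (Filter.Eventually.of_forall fun z =>
      mul_pos (hΘpos T (y + z))
        (mul_pos (Real.rpow_pos_of_pos (hFpos T (y + z)) _) (hφpos z)))
  have hval : ∀ γ : ℝ, γ < 1 → (∫ z, Θhat T (y + z) * q z γ)
      = (∫ z, Θhat T (y + z) * (F T (y + z) ^ (1 / (1 - γ)) * φ z))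
        / (∫ w, F T (y + w) ^ (1 / (1 - γ)) * φ w) := by
    intro γ hγ
    simp_rw [hq γ hγ, ← mul_div_assoc]
    rw [integral_div]
  refine ⟨?_, ?_, ?_⟩
  · intro γ hγ
    constructor
    · rw [hπhat γ hγ, hval γ hγ]
      exact mul_pos (hKpos γ hγ) (div_pos (hIcpos γ hγ) (hDpos γ hγ))
    · rw [hπm γ hγ]
      exact mul_pos (hKpos γ hγ) (hΘpos t y)
  · intro γ hγ0 hγ1
    rw [hπm γ hγ1, hπhat γ hγ1, hval γ hγ1]
    refine mul_le_mul_of_nonneg_left ?_ (hKpos γ hγ1).le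
    rw [le_div_iff₀ (hDpos γ hγ1), hΘ t y, div_mul_eq_mul_div, div_le_iff₀ (hFpos t y),
      ← I1, ← I2]
    refine corr hNφint (hqint γ hγ1) (hIcint γ hγ1) hFφint fun z w => ?_
    rw [hNeq (y + z), hNeq (y + w)]
    refine ptwise2 (hFpos T (y + z)) (hFpos T (y + w)) (hφpos z).le (hφpos w).le ?_
    rcases le_total z w with hzw | hzw
    · have h1 : Θhat T (y + z) ≤ Θhat T (y + w) := hΘmono _ _ (by linarith)
      have h2 : F T (y + z) ^ (1 / (1 - γ) - 1) ≤ F T (y + w) ^ (1 / (1 - γ) - 1) := by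
        refine Real.rpow_le_rpow (hFpos T (y + z)).le (hFmono _ _ (by linarith)) ?_
        rw [sub_nonneg, le_div_iff₀ (by linarith : (0:ℝ) < 1 - γ)]
        linarith
      nlinarith [mul_nonneg (sub_nonneg.mpr h1) (sub_nonneg.mpr h2)]
    · have h1 : Θhat T (y + w) ≤ Θhat T (y + z) := hΘmono _ _ (by linarith)
      have h2 : F T (y + w) ^ (1 / (1 - γ) - 1) ≤ F T (y + z) ^ (1 / (1 - γ) - 1) := by
        refine Real.rpow_le_rpow (hFpos T (y + w)).le (hFmono _ _ (by linarith)) ?_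
        rw [sub_nonneg, le_div_iff₀ (by linarith : (0:ℝ) < 1 - γ)]
        linarith
      nlinarith [mul_nonneg (sub_nonneg.mpr h1) (sub_nonneg.mpr h2)]
  · intro γ hγ0
    have hγ1 : γ < 1 := by linarith
    rw [hπm γ hγ1, hπhat γ hγ1, hval γ hγ1]
    refine mul_le_mul_of_nonneg_left ?_ (hKpos γ hγ1).le
    rw [div_le_iff₀ (hDpos γ hγ1), hΘ t y, div_mul_eq_mul_div, le_div_iff₀ (hFpos t y),
      ← I1, ← I2]
    refine corr (hIcint γ hγ1) hFφint hNφint (hqint γ hγ1) fun z w => ?_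
    rw [hNeq (y + z), hNeq (y + w)]
    refine ptwise2' (hFpos T (y + z)) (hFpos T (y + w)) (hφpos z).le (hφpos w).le ?_
    rcases le_total z w with hzw | hzw
    · have h1 : Θhat T (y + z) ≤ Θhat T (y + w) := hΘmono _ _ (by linarith)
      have h2 : F T (y + w) ^ (1 / (1 - γ) - 1) ≤ F T (y + z) ^ (1 / (1 - γ) - 1) := by
        refine Real.rpow_le_rpow_of_nonpos (hFpos T (y + z)) (hFmono _ _ (by linarith)) ?_
        rw [sub_nonpos, div_le_one (by linarith : (0:ℝ) < 1 - γ)]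
        linarith
      nlinarith [mul_nonneg (sub_nonneg.mpr h1) (sub_nonneg.mpr h2)]
    · have h1 : Θhat T (y + w) ≤ Θhat T (y + z) := hΘmono _ _ (by linarith)
      have h2 : F T (y + z) ^ (1 / (1 - γ) - 1) ≤ F T (y + w) ^ (1 / (1 - γ) - 1) := by
        refine Real.rpow_le_rpow_of_nonpos (hFpos T (y + w)) (hFmono _ _ (by linarith)) ?_
        rw [sub_nonpos, div_le_one (by linarith : (0:ℝ) < 1 - γ)]
        linarith
      nlinarith [mul_nonneg (sub_nonneg.mpr h1) (sub_nonneg.mpr h2)]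
end

section
/- (Exponential portfolio ratio bounded by 1) Assume μ is supported on (0,∞) with finite first moment. For t ∈ [0,T), y ∈ ℝ: 0 ≤ (∫ Θ̂(T,y+z) φ_{T−t}(z) dz) / Θ̂(t,y) ≤ 1, where Θ̂(t,y) = ∫Θ̂(T,y+z)·F(T,y+z)φ_{T−t}(z)dz/∫F(T,y+w)φ_{T−t}(w)dw. -/
open MeasureTheory Real ENNReal

/-- Chebyshev / FKG-type correlation inequality for weighted integrals. -/
lemma cheb_aux {X : Type*} [MeasurableSpace X] (ν : Measure X) [SigmaFinite ν]
    (f g w : X → ℝ) (hw : ∀ x, 0 ≤ w x)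
    (hm : ∀ a b, 0 ≤ (f a - f b) * (g a - g b))
    (h1 : Integrable (fun x => f x * w x) ν)
    (h2 : Integrable (fun x => g x * w x) ν)
    (h3 : Integrable (fun x => f x * g x * w x) ν)
    (h4 : Integrable w ν) :
    (∫ x, f x * w x ∂ν) * (∫ x, g x * w x ∂ν) ≤
      (∫ x, f x * g x * w x ∂ν) * (∫ x, w x ∂ν) := by
  have hi1 : Integrable (fun p : X × X => (f p.1 * g p.1 * w p.1) * w p.2) (ν.prod ν) :=
    h3.mul_prod h4
  have hi2 : Integrable (fun p : X × X => w p.1 * (f p.2 * g p.2 * w p.2)) (ν.prod ν) :=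
    h4.mul_prod h3
  have hi3 : Integrable (fun p : X × X => (f p.1 * w p.1) * (g p.2 * w p.2)) (ν.prod ν) :=
    h1.mul_prod h2
  have hi4 : Integrable (fun p : X × X => (g p.1 * w p.1) * (f p.2 * w p.2)) (ν.prod ν) :=
    h2.mul_prod h1
  have hiL : Integrable (fun p : X × X => (f p.1 * g p.1 * w p.1) * w p.2
      + w p.1 * (f p.2 * g p.2 * w p.2)) (ν.prod ν) :=
    (hi1.add hi2).congr (Filter.Eventually.of_forall fun _ => rfl)
  have hiR : Integrable (fun p : X × X => (f p.1 * w p.1) * (g p.2 * w p.2)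
      + (g p.1 * w p.1) * (f p.2 * w p.2)) (ν.prod ν) :=
    (hi3.add hi4).congr (Filter.Eventually.of_forall fun _ => rfl)
  have key : 0 ≤ ∫ p : X × X,
      ((f p.1 * g p.1 * w p.1) * w p.2 + w p.1 * (f p.2 * g p.2 * w p.2)
        - ((f p.1 * w p.1) * (g p.2 * w p.2) + (g p.1 * w p.1) * (f p.2 * w p.2)))
      ∂(ν.prod ν) := by
    apply integral_nonneg
    intro p
    have h := mul_nonneg (hm p.1 p.2) (mul_nonneg (hw p.1) (hw p.2))
    simp only [Pi.zero_apply]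
    nlinarith [h]
  have j1 : (∫ p : X × X, (f p.1 * g p.1 * w p.1) * w p.2 ∂(ν.prod ν))
      = (∫ x, f x * g x * w x ∂ν) * ∫ x, w x ∂ν :=
    integral_prod_mul (fun x => f x * g x * w x) w
  have j2 : (∫ p : X × X, w p.1 * (f p.2 * g p.2 * w p.2) ∂(ν.prod ν))
      = (∫ x, w x ∂ν) * ∫ x, f x * g x * w x ∂ν :=
    integral_prod_mul w (fun x => f x * g x * w x)
  have j3 : (∫ p : X × X, (f p.1 * w p.1) * (g p.2 * w p.2) ∂(ν.prod ν))
      = (∫ x, f x * w x ∂ν) * ∫ x, g x * w x ∂ν :=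
    integral_prod_mul (fun x => f x * w x) (fun x => g x * w x)
  have j4 : (∫ p : X × X, (g p.1 * w p.1) * (f p.2 * w p.2) ∂(ν.prod ν))
      = (∫ x, g x * w x ∂ν) * ∫ x, f x * w x ∂ν :=
    integral_prod_mul (fun x => g x * w x) (fun x => f x * w x)
  rw [integral_sub hiL hiR, integral_add hi1 hi2, integral_add hi3 hi4,
    j1, j2, j3, j4] at key
  nlinarith [key]

lemma integral_pos_of_pos {X : Type*} [MeasurableSpace X] {ν : Measure X} {f : X → ℝ}
    (hν : ν ≠ 0) (hf : ∀ x, 0 < f x) (hi : Integrable f ν) : 0 < ∫ x, f x ∂ν := by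
  rw [integral_pos_iff_support_of_nonneg (fun x => (hf x).le) hi]
  have : Function.support f = Set.univ := Set.eq_univ_of_forall fun x => (hf x).ne'
  rw [this]
  exact Measure.measure_univ_pos.mpr hν

lemma integral_pos_of_ae_pos {X : Type*} [MeasurableSpace X] {ν : Measure X}
    [IsProbabilityMeasure ν] {f : X → ℝ}
    (hf : ∀ᵐ x ∂ν, 0 < f x) (hi : Integrable f ν) : 0 < ∫ x, f x ∂ν := by
  rw [integral_pos_iff_support_of_nonneg_ae (hf.mono fun x h => h.le) hi]
  have h0 : ν {x | ¬ (0 < f x)} = 0 := ae_iff.mp hf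
  by_contra hle
  push_neg at hle
  have hs0 : ν (Function.support f) = 0 := le_antisymm hle zero_le
  have hcup : (Set.univ : Set X) ⊆ Function.support f ∪ {x | ¬ (0 < f x)} := by
    intro x _
    by_cases h : 0 < f x
    · exact Or.inl h.ne'
    · exact Or.inr h
  have : (1 : ℝ≥0∞) ≤ 0 := by
    calc (1 : ℝ≥0∞) = ν Set.univ := (measure_univ).symm
      _ ≤ ν (Function.support f ∪ {x | ¬ (0 < f x)}) := measure_mono hcup
      _ ≤ ν (Function.support f) + ν {x | ¬ (0 < f x)} := measure_union_le _ _
      _ = 0 := by rw [hs0, h0, add_zero]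
  simp at this

/-- the exponential-utility portfolio ratio is between 0 and 1:
`0 ≤ (∫ Θ̂(T,y+z) φ_{T-t}(z) dz) / Θ̂(t,y) ≤ 1`, where
`Θ̂(t,y) = ∫ Θ̂(T,y+z) F(T,y+z) φ_{T-t}(z) dz / ∫ F(T,y+w) φ_{T-t}(w) dw`
and μ is supported on `(0,∞)` with finite first moment. -/
theorem stmt18 (μ : Measure ℝ) [IsProbabilityMeasure μ]
    (hsupp : ∀ᵐ θ ∂μ, 0 < θ)
    (hmom : Integrable (fun θ : ℝ => |θ|) μ)
    (T t y : ℝ) (ht : 0 ≤ t) (htT : t < T)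
    (F Θhat : ℝ → ℝ → ℝ)
    (hF : ∀ s u, F s u = ∫ θ, Real.exp (θ * u - θ ^ 2 * s / 2) ∂μ)
    (hΘ : ∀ s u, Θhat s u =
      (∫ θ, θ * Real.exp (θ * u - θ ^ 2 * s / 2) ∂μ) / F s u)
    (hFint : ∀ s u, Integrable (fun θ : ℝ => Real.exp (θ * u - θ ^ 2 * s / 2)) μ)
    (hNint : ∀ s u, Integrable (fun θ : ℝ => θ * Real.exp (θ * u - θ ^ 2 * s / 2)) μ)
    (φ : ℝ → ℝ)
    (hφ : ∀ z, φ z = Real.exp (-z ^ 2 / (2 * (T - t))) / Real.sqrt (2 * π * (T - t)))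
    (hint1 : Integrable (fun z => Θhat T (y + z) * φ z))
    (hint2 : Integrable (fun z => Θhat T (y + z) * (F T (y + z) * φ z)))
    (hint3 : Integrable (fun w => F T (y + w) * φ w))
    (hrep : Θhat t y = (∫ z, Θhat T (y + z) * (F T (y + z) * φ z)) /
      ∫ w, F T (y + w) * φ w) :
    0 ≤ (∫ z, Θhat T (y + z) * φ z) / Θhat t y ∧
    (∫ z, Θhat T (y + z) * φ z) / Θhat t y ≤ 1 := by
  have hσ : 0 < T - t := sub_pos.mpr htT
  have hπσ : 0 < 2 * π * (T - t) := by positivity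
  -- positivity of φ
  have hφpos : ∀ z, 0 < φ z := fun z => by
    rw [hφ]; exact div_pos (exp_pos _) (Real.sqrt_pos.mpr hπσ)
  -- positivity of F
  have hFpos : ∀ s u, 0 < F s u := fun s u => by
    rw [hF]
    exact integral_pos_of_ae_pos (Filter.Eventually.of_forall fun θ => exp_pos _) (hFint s u)
  -- positivity of the numerator
  have hNpos : ∀ s u, 0 < ∫ θ, θ * Real.exp (θ * u - θ ^ 2 * s / 2) ∂μ := fun s u => by
    refine integral_pos_of_ae_pos ?_ (hNint s u)
    filter_upwards [hsupp] with θ hθ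
    exact mul_pos hθ (exp_pos _)
  have hΘpos : ∀ u, 0 < Θhat T u := fun u => by
    rw [hΘ]; exact div_pos (hNpos T u) (hFpos T u)
  -- monotonicity of F T
  have hFmono : ∀ u v : ℝ, u ≤ v → F T u ≤ F T v := by
    intro u v huv
    rw [hF, hF]
    refine integral_mono_ae (hFint T u) (hFint T v) ?_
    filter_upwards [hsupp] with θ hθ
    exact exp_le_exp.mpr (by nlinarith [mul_le_mul_of_nonneg_left huv hθ.le])
  -- monotonicity of Θhat T, via Chebyshev applied to the tilted measure
  have hΘmono : ∀ u v : ℝ, u ≤ v → Θhat T u ≤ Θhat T v := by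
    intro u v huv
    have hd : 0 ≤ v - u := sub_nonneg.mpr huv
    have heq : ∀ θ : ℝ, Real.exp (θ * (v - u)) * Real.exp (θ * u - θ ^ 2 * T / 2)
        = Real.exp (θ * v - θ ^ 2 * T / 2) := fun θ => by
      rw [← Real.exp_add]; ring_nf
    have key := cheb_aux μ (fun θ => θ) (fun θ => Real.exp (θ * (v - u)))
      (fun θ => Real.exp (θ * u - θ ^ 2 * T / 2))
      (fun θ => (exp_pos _).le)
      (by
        intro a b
        rcases le_total a b with h | h
        · have : Real.exp (a * (v - u)) ≤ Real.exp (b * (v - u)) :=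
            exp_le_exp.mpr (mul_le_mul_of_nonneg_right h hd)
          exact mul_nonneg_of_nonpos_of_nonpos (by linarith) (by linarith)
        · have : Real.exp (b * (v - u)) ≤ Real.exp (a * (v - u)) :=
            exp_le_exp.mpr (mul_le_mul_of_nonneg_right h hd)
          exact mul_nonneg (by linarith) (by linarith))
      (hNint T u)
      ((hFint T v).congr (Filter.Eventually.of_forall fun θ => (heq θ).symm))
      ((hNint T v).congr (Filter.Eventually.of_forall fun θ => by
        dsimp only; rw [mul_assoc, heq θ]))
      (hFint T u)
    have e2 : (∫ θ, Real.exp (θ * (v - u)) * Real.exp (θ * u - θ ^ 2 * T / 2) ∂μ)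
        = ∫ θ, Real.exp (θ * v - θ ^ 2 * T / 2) ∂μ := by
      refine integral_congr_ae (Filter.Eventually.of_forall fun θ => heq θ)
    have e3 : (∫ θ, θ * Real.exp (θ * (v - u)) * Real.exp (θ * u - θ ^ 2 * T / 2) ∂μ)
        = ∫ θ, θ * Real.exp (θ * v - θ ^ 2 * T / 2) ∂μ := by
      refine integral_congr_ae (Filter.Eventually.of_forall fun θ => ?_)
      dsimp only
      rw [mul_assoc, heq θ]
    rw [e2, e3] at key
    rw [hΘ, hΘ, div_le_div_iff₀ (hFpos T u) (hFpos T v)]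
    calc (∫ θ, θ * Real.exp (θ * u - θ ^ 2 * T / 2) ∂μ) * F T v
        = (∫ θ, θ * Real.exp (θ * u - θ ^ 2 * T / 2) ∂μ) *
            ∫ θ, Real.exp (θ * v - θ ^ 2 * T / 2) ∂μ := by rw [hF]
      _ ≤ (∫ θ, θ * Real.exp (θ * v - θ ^ 2 * T / 2) ∂μ) *
            ∫ θ, Real.exp (θ * u - θ ^ 2 * T / 2) ∂μ := key
      _ = (∫ θ, θ * Real.exp (θ * v - θ ^ 2 * T / 2) ∂μ) * F T u := by rw [hF]
  -- the Gaussian density integrates to 1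
  have hb : 0 < (1 : ℝ) / (2 * (T - t)) := by positivity
  have hφeq : ∀ z : ℝ, φ z =
      Real.exp (-(1 / (2 * (T - t))) * z ^ 2) * (Real.sqrt (2 * π * (T - t)))⁻¹ := fun z => by
    rw [hφ, div_eq_mul_inv]
    congr 2
    field_simp
  have hφint1 : ∫ z, φ z = 1 := by
    have h := integral_gaussian (1 / (2 * (T - t)))
    have e : ∫ z, φ z = (∫ z, Real.exp (-(1 / (2 * (T - t))) * z ^ 2)) *
        (Real.sqrt (2 * π * (T - t)))⁻¹ := by
      rw [← integral_mul_const]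
      exact integral_congr_ae (Filter.Eventually.of_forall hφeq)
    rw [e, h]
    have h2 : π / (1 / (2 * (T - t))) = 2 * π * (T - t) := by field_simp
    rw [h2]
    exact mul_inv_cancel₀ (Real.sqrt_pos.mpr hπσ).ne'
  have hφinteg : Integrable φ := by
    refine (((integrable_exp_neg_mul_sq hb).mul_const
      (Real.sqrt (2 * π * (T - t)))⁻¹)).congr
      (Filter.Eventually.of_forall fun z => (hφeq z).symm)
  -- positivity of denominator and numerator in the representation
  have hvol : (volume : Measure ℝ) ≠ 0 := by
    intro h
    have := Real.volume_Icc (a := 0) (b := 1)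
    rw [h] at this
    simp at this
  have hDpos : 0 < ∫ w, F T (y + w) * φ w :=
    integral_pos_of_pos hvol (fun w => mul_pos (hFpos T _) (hφpos w)) hint3
  have hNumpos : 0 < ∫ z, Θhat T (y + z) * (F T (y + z) * φ z) :=
    integral_pos_of_pos hvol
      (fun z => mul_pos (hΘpos _) (mul_pos (hFpos T _) (hφpos z))) hint2
  have hΘtpos : 0 < Θhat t y := by
    rw [hrep]; exact div_pos hNumpos hDpos
  have hApos : 0 ≤ ∫ z, Θhat T (y + z) * φ z :=
    integral_nonneg fun z => mul_nonneg (hΘpos _).le (hφpos z).le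
  constructor
  · exact div_nonneg hApos hΘtpos.le
  · rw [div_le_one hΘtpos, hrep, le_div_iff₀ hDpos]
    -- Chebyshev for the Gaussian weight
    have key := cheb_aux volume (fun z => Θhat T (y + z)) (fun z => F T (y + z)) φ
      (fun z => (hφpos z).le)
      (by
        intro a b
        rcases le_total a b with h | h
        · exact mul_nonneg_of_nonpos_of_nonpos
            (by linarith [hΘmono (y + a) (y + b) (by linarith)])
            (by linarith [hFmono (y + a) (y + b) (by linarith)])
        · exact mul_nonneg
            (by linarith [hΘmono (y + b) (y + a) (by linarith)])
            (by linarith [hFmono (y + b) (y + a) (by linarith)]))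
      hint1 hint3
      (hint2.congr (Filter.Eventually.of_forall fun z => (mul_assoc _ _ _).symm))
      hφinteg
    rw [hφint1, mul_one] at key
    calc (∫ z, Θhat T (y + z) * φ z) * ∫ w, F T (y + w) * φ w
        ≤ ∫ z, Θhat T (y + z) * F T (y + z) * φ z := key
      _ = ∫ z, Θhat T (y + z) * (F T (y + z) * φ z) :=
          integral_congr_ae (Filter.Eventually.of_forall fun z => mul_assoc _ _ _)
end
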